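/- Let G be a simple graph and u a vertex of G that has at least two pure branches of length 2 attached: paths u,v_1,v_2 and u,v_3,v_4 with v_2, v_4 leaves and v_1, v_3 of degree 2, all of v_1,v_2,v_3,v_4 distinct. Let H be the induced subgraph of G on V(G) \ {v_1, v_2}. Then τ_max(H) ≤ τ_max(G) − 1. -/

import Mathlib

/-- `C` is a vertex cover of the graph `G`. -/
def gIsCover {V : Type} (G : SimpleGraph V) (C : Finset V) : Prop :=
  ∀ ⦃x y⦄, G.Adj x y → x ∈ C ∨ y ∈ C

/-- `C` is a minimal vertex cover of `G`. -/
def gIsMinCover {V : Type} (G : SimpleGraph V) (C : Finset V) : Prop :=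
  gIsCover G C ∧ ∀ D ⊂ C, ¬ gIsCover G D

/-- `τ_max(G)`: the maximum cardinality of a minimal vertex cover of `G`. -/
noncomputable def gTauMax {V : Type} (G : SimpleGraph V) : ℕ :=
  sSup {m | ∃ C : Finset V, gIsMinCover G C ∧ C.card = m}

/-- The subgraph of `G` induced on the vertex subset `s` (kept on the same ambient
vertex type: all vertices outside `s` become isolated, which does not affect
minimal vertex covers). -/
def SimpleGraph.restrict {V : Type} (G : SimpleGraph V) (s : Set V) : SimpleGraph V where
  Adj x y := G.Adj x y ∧ x ∈ s ∧ y ∈ s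
  symm := ⟨fun x y ⟨h, hx, hy⟩ => ⟨h.symm, hy, hx⟩⟩
  loopless := ⟨fun x ⟨h, _, _⟩ => G.loopless.irrefl x h⟩

lemma exists_minCover {V : Type} [Fintype V] [DecidableEq V] (G : SimpleGraph V) :
    ∃ C : Finset V, gIsMinCover G C := by
  have h : ∀ C : Finset V, gIsCover G C → ∃ D, D ⊆ C ∧ gIsMinCover G D := by
    intro C
    induction C using Finset.strongInductionOn with
    | _ C ih =>
      intro hC
      by_cases hmin : ∀ D ⊂ C, ¬ gIsCover G D
      · exact ⟨C, subset_rfl, hC, hmin⟩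
      · push_neg at hmin
        obtain ⟨D, hDC, hD⟩ := hmin
        obtain ⟨E, hE, hEmin⟩ := ih D hDC hD
        exact ⟨E, hE.trans hDC.subset, hEmin⟩
  obtain ⟨D, _, hD⟩ := h Finset.univ (fun x y _ => Or.inl (Finset.mem_univ x))
  exact ⟨D, hD⟩

lemma private_nbr {V : Type} [DecidableEq V] {G : SimpleGraph V} {C : Finset V}
    (hC : gIsMinCover G C) {c : V} (hc : c ∈ C) :
    ∃ y, G.Adj c y ∧ y ∉ C := by
  have h := hC.2 (C.erase c) (Finset.erase_ssubset hc)
  unfold gIsCover at h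
  push_neg at h
  obtain ⟨x, y, hxy, hx, hy⟩ := h
  rcases hC.1 hxy with h | h
  · have hx' : x = c := by
      by_contra h'
      exact hx (Finset.mem_erase.mpr ⟨h', h⟩)
    subst hx'
    exact ⟨y, hxy, fun hyC => hy (Finset.mem_erase.mpr ⟨hxy.ne', hyC⟩)⟩
  · have hy' : y = c := by
      by_contra h'
      exact hy (Finset.mem_erase.mpr ⟨h', h⟩)
    subst hy'
    exact ⟨x, hxy.symm, fun hxC => hx (Finset.mem_erase.mpr ⟨hxy.ne, hxC⟩)⟩

/-- If `u` has two pure branches of length 2, `u,v₁,v₂` and `u,v₃,v₄`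
(`v₂, v₄` leaves, `v₁, v₃` of degree 2, all distinct), and `H` is the induced subgraph
on `V(G) \ {v₁, v₂}`, then `τ_max(H) ≤ τ_max(G) - 1`. -/
theorem stmt_6 {V : Type} [Fintype V] [DecidableEq V] (G : SimpleGraph V)
    [DecidableRel G.Adj] (u v1 v2 v3 v4 : V)
    (hdist : v1 ≠ v2 ∧ v1 ≠ v3 ∧ v1 ≠ v4 ∧ v2 ≠ v3 ∧ v2 ≠ v4 ∧ v3 ≠ v4)
    (h1 : G.Adj u v1) (h2 : G.Adj v1 v2) (h3 : G.Adj u v3) (h4 : G.Adj v3 v4)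
    (hd2 : G.degree v2 = 1) (hd4 : G.degree v4 = 1)
    (hd1 : G.degree v1 = 2) (hd3 : G.degree v3 = 2) :
    gTauMax (G.restrict {x | x ≠ v1 ∧ x ≠ v2}) + 1 ≤ gTauMax G := by
  obtain ⟨h12, h13, h14, h23, h24, h34⟩ := hdist
  set s : Set V := {x | x ≠ v1 ∧ x ≠ v2} with hs
  set H := G.restrict s with hHdef
  -- v2's unique neighbor is v1
  have hv2 : ∀ x, G.Adj v2 x → x = v1 := by
    intro x hx
    have hmem : x ∈ G.neighborFinset v2 := by simpa using hx
    have h1mem : v1 ∈ G.neighborFinset v2 := by simpa using h2.symm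
    have hcard : (G.neighborFinset v2).card = 1 := hd2
    obtain ⟨a, ha⟩ := Finset.card_eq_one.mp hcard
    rw [ha, Finset.mem_singleton] at hmem h1mem
    rw [hmem, h1mem]
  -- take a maximum minimal cover of H
  have hne : ({m | ∃ C : Finset V, gIsMinCover H C ∧ C.card = m}).Nonempty := by
    obtain ⟨C, hC⟩ := exists_minCover H
    exact ⟨C.card, C, hC, rfl⟩
  have hbdd : BddAbove {m | ∃ C : Finset V, gIsMinCover H C ∧ C.card = m} :=
    ⟨Fintype.card V, by rintro m ⟨C, _, rfl⟩; exact Finset.card_le_univ C⟩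
  obtain ⟨C, hC, hCcard⟩ := Nat.sSup_mem hne hbdd
  -- v1, v2 are isolated in H, so not in C
  have hv1C : v1 ∉ C := by
    intro h
    refine hC.2 (C.erase v1) (Finset.erase_ssubset h) ?_
    intro x y hxy
    rcases hC.1 hxy with hx | hy
    · exact Or.inl (Finset.mem_erase.mpr ⟨hxy.2.1.1, hx⟩)
    · exact Or.inr (Finset.mem_erase.mpr ⟨hxy.2.2.1, hy⟩)
  have hv2C : v2 ∉ C := by
    intro h
    refine hC.2 (C.erase v2) (Finset.erase_ssubset h) ?_
    intro x y hxy
    rcases hC.1 hxy with hx | hy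
    · exact Or.inl (Finset.mem_erase.mpr ⟨hxy.2.1.2, hx⟩)
    · exact Or.inr (Finset.mem_erase.mpr ⟨hxy.2.2.2, hy⟩)
  -- insert v1 C is a cover of G
  have hcover : gIsCover G (insert v1 C) := by
    intro x y hxy
    by_cases hx1 : x = v1
    · exact Or.inl (by simp [hx1])
    by_cases hy1 : y = v1
    · exact Or.inr (by simp [hy1])
    by_cases hx2 : x = v2
    · subst hx2; exact absurd (hv2 y hxy) hy1
    by_cases hy2 : y = v2
    · subst hy2; exact absurd (hv2 x hxy.symm) hx1
    rcases hC.1 (show H.Adj x y from ⟨hxy, ⟨hx1, hx2⟩, ⟨hy1, hy2⟩⟩) with h | h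
    · exact Or.inl (Finset.mem_insert_of_mem h)
    · exact Or.inr (Finset.mem_insert_of_mem h)
  -- and it is minimal
  have hmin : gIsMinCover G (insert v1 C) := by
    refine ⟨hcover, ?_⟩
    intro D hD hDcov
    obtain ⟨c, hcmem, hcD⟩ := Finset.exists_of_ssubset hD
    rcases Finset.mem_insert.mp hcmem with rfl | hcC
    · rcases hDcov h2 with h | h
      · exact hcD h
      · rcases Finset.mem_insert.mp (hD.subset h) with e | e
        · exact h12 e.symm
        · exact hv2C e
    · obtain ⟨y, hy, hyC⟩ := private_nbr hC hcC
      rcases hDcov hy.1 with h | h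
      · exact hcD h
      · rcases Finset.mem_insert.mp (hD.subset h) with e | e
        · exact hy.2.2.1 e
        · exact hyC e
  have hcardins : (insert v1 C).card = C.card + 1 := Finset.card_insert_of_notMem hv1C
  have hmemG : C.card + 1 ∈ {m | ∃ D : Finset V, gIsMinCover G D ∧ D.card = m} :=
    ⟨insert v1 C, hmin, hcardins⟩
  have hbddG : BddAbove {m | ∃ D : Finset V, gIsMinCover G D ∧ D.card = m} :=
    ⟨Fintype.card V, by rintro m ⟨D, _, rfl⟩; exact Finset.card_le_univ D⟩
  have : gTauMax H + 1 = C.card + 1 := by rw [gTauMax, ← hCcard]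
  rw [this]
  exact le_csSup hbddG hmemG
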